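/- arXiv:0910.5732 — 2 statements merged into one kernel-verified Lean document; each statement's English description precedes it below -/
import Mathlib

section
/- Let (W,S) be a Coxeter system of finite rank, and suppose S1, S2 ⊆ S satisfy S = S1 ∪ S2 and, with S0 = S1 ∩ S2, m(a,b) = ∞ for all a ∈ S1−S0 and b ∈ S2−S0. Then the canonical homomorphism, induced by the inclusions of ⟨S1⟩ and ⟨S2⟩ into W, from the amalgamated free product ⟨S1⟩ *_{⟨S0⟩} ⟨S2⟩ (the pushout of the inclusions ⟨S0⟩ → ⟨S1⟩ and ⟨S0⟩ → ⟨S2⟩) to W is an isomorphism. -/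
universe u

variable {W : Type u} [Group W]

/-- `S` is a set of Coxeter generators of `W`: `W` has the Coxeter presentation
`⟨S ∣ (st)^{m(s,t)} = 1⟩` whose simple reflections are the elements of `S`. -/
def IsCoxeterGeneratingSet (W : Type u) [Group W] (S : Set W) : Prop :=
  ∃ (M : CoxeterMatrix S) (cs : CoxeterSystem M W), ∀ s : S, cs.simple s = (s : W)

/-- The presentation diagram of a Coxeter system, induced on the vertex set `A ⊆ W`:
distinct `s, t ∈ A` are adjacent exactly when `s * t` has finite order
(recall `orderOf x = 0` exactly when `x` has infinite order). -/
def presGraph (W : Type u) [Group W] (A : Set W) : SimpleGraph W where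
  Adj s t := s ≠ t ∧ s ∈ A ∧ t ∈ A ∧ orderOf (s * t) ≠ 0
  symm := ⟨by
    rintro s t ⟨h1, h2, h3, h4⟩
    refine ⟨h1.symm, h3, h2, ?_⟩
    have : SemiconjBy s (t * s) (s * t) := by unfold SemiconjBy; group
    rwa [this.orderOf_eq s]⟩
  loopless := ⟨by rintro s ⟨h, -⟩; exact h rfl⟩

/-- `T` separates `R`: two elements of `R − T` lie in different connected components of the
induced subgraph of the presentation diagram on `R − T`. -/
def Separates (W : Type u) [Group W] (R T : Set W) : Prop :=
  ∃ a ∈ R \ T, ∃ b ∈ R \ T, ¬ (presGraph W (R \ T)).Reachable a b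

/-- A subset `C` is complete if every product of two of its elements has finite order. -/
def IsCompleteSet (W : Type u) [Group W] (C : Set W) : Prop :=
  ∀ s ∈ C, ∀ t ∈ C, orderOf (s * t) ≠ 0

/-- `R` is separated by a complete subset of `R`. -/
def SeparatedByComplete (W : Type u) [Group W] (R : Set W) : Prop :=
  ∃ T ⊆ R, IsCompleteSet W T ∧ Separates W R T

/-- `(S1, S0, S2)` is a separation of `S`. -/
def IsSeparation (W : Type u) [Group W] (S S1 S0 S2 : Set W) : Prop :=
  S1 ∪ S2 = S ∧ S1 ∩ S2 = S0 ∧ (S1 \ S0).Nonempty ∧ (S2 \ S0).Nonempty ∧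
    ∀ a ∈ S1 \ S0, ∀ b ∈ S2 \ S0, orderOf (a * b) = 0

/-- `S0` is an `(a,b)`-separator of `S`: `a` and `b` lie in different connected components
of the induced subgraph of the presentation diagram on `S − S0`. -/
def IsABSeparator (W : Type u) [Group W] (S S0 : Set W) (a b : W) : Prop :=
  a ∈ S \ S0 ∧ b ∈ S \ S0 ∧ ¬ (presGraph W (S \ S0)).Reachable a b

/-- `S0` is a relative minimal separator of `S`: a minimal `(a,b)`-separator of `S`
for some `a, b`. -/
def RelMinSeparator (W : Type u) [Group W] (S S0 : Set W) : Prop :=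
  ∃ a b, IsABSeparator W S S0 a b ∧ ∀ T ⊂ S0, ¬ IsABSeparator W S T a b

/-- The set `wTw⁻¹`. -/
def conjSet (w : W) (T : Set W) : Set W := (fun x => w * x * w⁻¹) '' T

/-- `S0` is a c-minimal separator of `S`: `S0` separates `S` and no conjugate of a
proper subset of `S0` that lies in `S` separates `S`. -/
def CMinSeparator (W : Type u) [Group W] (S S0 : Set W) : Prop :=
  Separates W S S0 ∧
    ¬ ∃ (w : W) (T : Set W), T ⊆ S0 ∧ T ≠ S0 ∧ conjSet w T ⊆ S ∧ Separates W S (conjSet w T)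

/-- The union of the bags over the component of the tree `T` minus the edge `{u,v}`
containing `u`. -/
def edgeSide {W : Type u} [Group W] {V : Type} (T : SimpleGraph V) (bag : V → Set W)
    (u v : V) : Set W :=
  ⋃ w ∈ {w | (T.deleteEdges {s(u, v)}).Reachable u w}, bag w

/-- A visual tree decomposition of the Coxeter system `(W, S)`: a finite nonempty tree
with bags `R_v ⊆ S` covering `S` such that for each edge `{u,v}`, the unions `A`, `B` of
bags over the two components of the tree minus the edge satisfy `A ∩ B = R_u ∩ R_v` and
`m(a,b) = ∞` for `a ∈ A − R_u ∩ R_v`, `b ∈ B − R_u ∩ R_v`.  This exhibits `W` as an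
iterated visual amalgamated product of the groups `⟨R_v⟩` over the groups `⟨R_u ∩ R_v⟩`. -/
structure VisualTreeDecomp (W : Type u) [Group W] (S : Set W) where
  V : Type
  fintypeV : Fintype V
  T : SimpleGraph V
  isTree : T.IsTree
  bag : V → Set W
  bag_subset : ∀ v, bag v ⊆ S
  bags_cover : (⋃ v, bag v) = S
  inter_eq : ∀ u v, T.Adj u v →
    edgeSide T bag u v ∩ edgeSide T bag v u = bag u ∩ bag v
  infinite_order : ∀ u v, T.Adj u v →
    ∀ a ∈ edgeSide T bag u v \ (bag u ∩ bag v),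
      ∀ b ∈ edgeSide T bag v u \ (bag u ∩ bag v), orderOf (a * b) = 0

/-- A visual tree decomposition is reduced if each edge set is a proper subset of
the two incident bags. -/
def VisualTreeDecomp.Reduced {W : Type u} [Group W] {S : Set W}
    (D : VisualTreeDecomp W S) : Prop :=
  ∀ u v, D.T.Adj u v → D.bag u ∩ D.bag v ⊂ D.bag u ∧ D.bag u ∩ D.bag v ⊂ D.bag v

/-- A group `G` has property FA if every action of `G` by graph automorphisms and
without inversions on a (nonempty) tree has a global fixed vertex. -/
def HasPropertyFA (G : Type u) [Group G] : Prop :=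
  ∀ (V : Type u) (T : SimpleGraph V), T.IsTree →
    ∀ [MulAction G V],
      (∀ (g : G) (a b : V), T.Adj a b → T.Adj (g • a) (g • b)) →
      (¬ ∃ (g : G) (a b : V), T.Adj a b ∧ g • a = b ∧ g • b = a) →
      ∃ x : V, ∀ g : G, g • x = x

/-- The class 𝓕𝓐 of subgroups of `W`: those contained in a subgroup with property FA. -/
def MemFA {W : Type u} [Group W] (H : Subgroup W) : Prop :=
  ∃ K : Subgroup W, H ≤ K ∧ HasPropertyFA K

/-- A chord of a closed walk: an edge of the graph between two vertices of the walk
that is not an edge of the walk. -/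
def SimpleGraph.Walk.HasChord {V : Type*} {G : SimpleGraph V} {v : V} (c : G.Walk v v) : Prop :=
  ∃ a b, a ∈ c.support ∧ b ∈ c.support ∧ G.Adj a b ∧ s(a, b) ∉ c.edges

/-- A graph is chordal if every cycle of length at least four has a chord. -/
def SimpleGraph.IsChordalGraph {V : Type*} (G : SimpleGraph V) : Prop :=
  ∀ (v : V) (c : G.Walk v v), c.IsCycle → 4 ≤ c.length → c.HasChord

/-- The set of all conjugates of elements of `S`. -/
def ConjugatesOf (W : Type u) [Group W] (S : Set W) : Set W :=
  {x | ∃ s ∈ S, ∃ w : W, x = w * s * w⁻¹}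

/-- `S` is sharp-angled with respect to `S'`: every pair `s, t ∈ S` with `2 < m(s,t) < ∞`
is conjugate by a single element into `S'`. -/
def SharpAngled (W : Type u) [Group W] (S S' : Set W) : Prop :=
  ∀ s ∈ S, ∀ t ∈ S, 2 < orderOf (s * t) →
    ∃ w : W, w * s * w⁻¹ ∈ S' ∧ w * t * w⁻¹ ∈ S'

/-- `S''` is obtained from `S` by an elementary twist `(S1, ℓ, S2)`. -/
def ElemTwist (W : Type u) [Group W] (S S'' : Set W) : Prop :=
  ∃ (S1 S2 : Set W) (ℓ : W), S1 ∪ S2 = S ∧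
    (∀ a ∈ S1 \ (S1 ∩ S2), ∀ b ∈ S2 \ (S1 ∩ S2), orderOf (a * b) = 0) ∧
    ℓ ∈ Subgroup.closure (S1 ∩ S2) ∧ conjSet ℓ (S1 ∩ S2) = S1 ∩ S2 ∧
    S'' = S1 ∪ conjSet ℓ S2

/-- Two sets of Coxeter generators are twist equivalent if one is obtained from the
other by a finite sequence of elementary twists. -/
def TwistEquiv (W : Type u) [Group W] (S S' : Set W) : Prop :=
  Relation.ReflTransGen (ElemTwist W) S S'

/-- `(W, S)` satisfies the twist conjecture: every set `S'` of Coxeter generators of `W`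
consisting of conjugates of elements of `S`, with `S` sharp-angled with respect to `S'`,
is twist equivalent to `S`. -/
def SatisfiesTwistConjecture (W : Type u) [Group W] (S : Set W) : Prop :=
  ∀ S' : Set W, IsCoxeterGeneratingSet W S' → S' ⊆ ConjugatesOf W S →
    SharpAngled W S S' → TwistEquiv W S S'

open CategoryTheory in
/-- Let `(W,S)` be a Coxeter system of finite rank, and suppose
`S1, S2 ⊆ S` satisfy `S = S1 ∪ S2` and, with `S0 = S1 ∩ S2`, `m(a,b) = ∞` for all
`a ∈ S1 − S0` and `b ∈ S2 − S0`.  Then the square of inclusions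
`⟨S0⟩ → ⟨S1⟩, ⟨S0⟩ → ⟨S2⟩, ⟨S1⟩ → W, ⟨S2⟩ → W` is a pushout square in the category of
groups, i.e. the canonical homomorphism `⟨S1⟩ *_{⟨S0⟩} ⟨S2⟩ → W` is an isomorphism. -/
theorem visual_amalgamated_product {W : Type u} [Group W] (S S1 S2 : Set W)
    (hcox : IsCoxeterGeneratingSet W S) (hfin : S.Finite)
    (hunion : S1 ∪ S2 = S)
    (hinf : ∀ a ∈ S1 \ (S1 ∩ S2), ∀ b ∈ S2 \ (S1 ∩ S2), orderOf (a * b) = 0) :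
    IsPushout
      (GrpCat.ofHom (Subgroup.inclusion
        (Subgroup.closure_mono (Set.inter_subset_left : S1 ∩ S2 ⊆ S1))))
      (GrpCat.ofHom (Subgroup.inclusion
        (Subgroup.closure_mono (Set.inter_subset_right : S1 ∩ S2 ⊆ S2))))
      (GrpCat.ofHom (Subgroup.closure S1).subtype)
      (GrpCat.ofHom (Subgroup.closure S2).subtype) := by
  classical
  obtain ⟨M, cs, hs⟩ := hcox
  have hS1 : S1 ⊆ S := hunion ▸ Set.subset_union_left
  have hS2 : S2 ⊆ S := hunion ▸ Set.subset_union_right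
  have hpow : ∀ i j : S, ((i : W) * (j : W)) ^ M i j = 1 := by
    intro i j
    have h := cs.simple_mul_simple_pow i j
    rwa [hs, hs] at h
  have hMzero : ∀ i j : S, orderOf ((i : W) * (j : W)) = 0 → M i j = 0 := by
    intro i j h
    exact Nat.eq_zero_of_zero_dvd (h ▸ orderOf_dvd_of_pow_eq_one (hpow i j))
  let F := GrpCat.ofHom (Subgroup.inclusion
    (Subgroup.closure_mono (Set.inter_subset_left : S1 ∩ S2 ⊆ S1)))
  let G := GrpCat.ofHom (Subgroup.inclusion
    (Subgroup.closure_mono (Set.inter_subset_right : S1 ∩ S2 ⊆ S2)))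
  let H := GrpCat.ofHom (Subgroup.closure S1).subtype
  let I := GrpCat.ofHom (Subgroup.closure S2).subtype
  show IsPushout F G H I
  have weq : F ≫ H = G ≫ I := by ext x; rfl
  have key : ∀ src : Limits.PushoutCocone F G,
      { d : GrpCat.of W ⟶ src.pt // (H ≫ d = src.inl) ∧ (I ≫ d = src.inr) ∧
        ∀ m : GrpCat.of W ⟶ src.pt, H ≫ m = src.inl → I ≫ m = src.inr → m = d } := by
    intro src
    let lft : ↥(Subgroup.closure S1) →* ↥src.pt := src.inl.hom
    let rgt : ↥(Subgroup.closure S2) →* ↥src.pt := src.inr.hom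
    have hcompat : ∀ (x : W) (h1 : x ∈ S1) (h2 : x ∈ S2),
        lft ⟨x, Subgroup.subset_closure h1⟩ = rgt ⟨x, Subgroup.subset_closure h2⟩ := by
      intro x h1 h2
      have hc := DFunLike.congr_fun (congrArg GrpCat.Hom.hom src.condition)
        (⟨x, Subgroup.subset_closure (Set.mem_inter h1 h2)⟩ :
          ↥(Subgroup.closure (S1 ∩ S2)))
      exact hc
    have hmem2 : ∀ i : S, (i : W) ∉ S1 → (i : W) ∈ S2 := by
      intro i hi
      have h12 : (i : W) ∈ S1 ∪ S2 := by rw [hunion]; exact i.2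
      exact h12.resolve_left hi
    let fs : S → ↥src.pt := fun i =>
      if h : (i : W) ∈ S1 then lft ⟨i, Subgroup.subset_closure h⟩
      else rgt ⟨i, Subgroup.subset_closure (hmem2 i h)⟩
    have inlpow : ∀ (i j : S) (hi : (i : W) ∈ S1) (hj : (j : W) ∈ S1),
        (lft ⟨i, Subgroup.subset_closure hi⟩ * lft ⟨j, Subgroup.subset_closure hj⟩)
          ^ M i j = 1 := by
      intro i j hi hj
      rw [← map_mul, ← map_pow]
      have h1 : ((⟨(i : W), Subgroup.subset_closure hi⟩ : Subgroup.closure S1) *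
          ⟨(j : W), Subgroup.subset_closure hj⟩) ^ M i j = 1 := by
        apply Subtype.ext
        push_cast
        exact hpow i j
      rw [h1, map_one]
    have inrpow : ∀ (i j : S) (hi : (i : W) ∈ S2) (hj : (j : W) ∈ S2),
        (rgt ⟨i, Subgroup.subset_closure hi⟩ * rgt ⟨j, Subgroup.subset_closure hj⟩)
          ^ M i j = 1 := by
      intro i j hi hj
      rw [← map_mul, ← map_pow]
      have h1 : ((⟨(i : W), Subgroup.subset_closure hi⟩ : Subgroup.closure S2) *
          ⟨(j : W), Subgroup.subset_closure hj⟩) ^ M i j = 1 := by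
        apply Subtype.ext
        push_cast
        exact hpow i j
      rw [h1, map_one]
    have hfs1 : ∀ (i : S) (hi : (i : W) ∈ S1),
        fs i = lft ⟨i, Subgroup.subset_closure hi⟩ := by
      intro i hi
      simp only [fs, dif_pos hi]
    have hfs2 : ∀ (i : S) (hi : (i : W) ∈ S2),
        fs i = rgt ⟨i, Subgroup.subset_closure hi⟩ := by
      intro i hi
      by_cases h : (i : W) ∈ S1
      · rw [hfs1 i h]; exact hcompat i h hi
      · simp only [fs, dif_neg h]
    have hlift : M.IsLiftable fs := by
      intro i j
      by_cases hi : (i : W) ∈ S1 <;> by_cases hj : (j : W) ∈ S1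
      · rw [hfs1 i hi, hfs1 j hj]; exact inlpow i j hi hj
      · -- i ∈ S1, j ∉ S1 so j ∈ S2
        have hj2 := hmem2 j hj
        by_cases hi2 : (i : W) ∈ S2
        · rw [hfs2 i hi2, hfs2 j hj2]; exact inrpow i j hi2 hj2
        · have h0 : M i j = 0 := hMzero i j
            (hinf i ⟨hi, fun hm => hi2 hm.2⟩ j ⟨hj2, fun hm => hj hm.1⟩)
          rw [h0, pow_zero]
      · -- i ∉ S1 so i ∈ S2, j ∈ S1
        have hi2 := hmem2 i hi
        by_cases hj2 : (j : W) ∈ S2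
        · rw [hfs2 i hi2, hfs2 j hj2]; exact inrpow i j hi2 hj2
        · have h0 : M j i = 0 := hMzero j i
            (hinf j ⟨hj, fun hm => hj2 hm.2⟩ i ⟨hi2, fun hm => hi hm.1⟩)
          rw [M.symmetric i j, h0, pow_zero]
      · have hi2 := hmem2 i hi
        have hj2 := hmem2 j hj
        rw [hfs2 i hi2, hfs2 j hj2]; exact inrpow i j hi2 hj2
    let φ : W →* ↥src.pt := cs.lift ⟨fs, hlift⟩
    have hφ : ∀ i : S, φ (i : W) = fs i := by
      intro i
      have h1 : φ (cs.simple i) = fs i := cs.lift_apply_simple hlift i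
      rwa [hs i] at h1
    refine ⟨GrpCat.ofHom φ, ?_, ?_, ?_⟩
    · apply GrpCat.ext
      intro x
      obtain ⟨x, hx⟩ := (x : ↥(Subgroup.closure S1))
      show φ x = lft ⟨x, hx⟩
      exact Subgroup.closure_induction
        (p := fun y hy => φ y = lft ⟨y, hy⟩)
        (fun y hy => by
          have h1 : φ y = fs ⟨y, hS1 hy⟩ := hφ ⟨y, hS1 hy⟩
          have h2 := hfs1 ⟨y, hS1 hy⟩ hy
          show φ y = lft ⟨y, Subgroup.subset_closure hy⟩
          rw [h1, h2])
        (by show φ 1 = lft 1; rw [map_one, map_one])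
        (fun y z hy hz py pz => by
          have py' : φ y = lft ⟨y, hy⟩ := py
          have pz' : φ z = lft ⟨z, hz⟩ := pz
          show φ (y * z) = lft (⟨y, hy⟩ * ⟨z, hz⟩)
          rw [map_mul, map_mul, py', pz'])
        (fun y hy py => by
          have py' : φ y = lft ⟨y, hy⟩ := py
          show φ y⁻¹ = lft (⟨y, hy⟩⁻¹)
          rw [map_inv, map_inv, py'])
        hx
    · apply GrpCat.ext
      intro x
      obtain ⟨x, hx⟩ := (x : ↥(Subgroup.closure S2))
      show φ x = rgt ⟨x, hx⟩
      exact Subgroup.closure_induction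
        (p := fun y hy => φ y = rgt ⟨y, hy⟩)
        (fun y hy => by
          have h1 : φ y = fs ⟨y, hS2 hy⟩ := hφ ⟨y, hS2 hy⟩
          have h2 := hfs2 ⟨y, hS2 hy⟩ hy
          show φ y = rgt ⟨y, Subgroup.subset_closure hy⟩
          rw [h1, h2])
        (by show φ 1 = rgt 1; rw [map_one, map_one])
        (fun y z hy hz py pz => by
          have py' : φ y = rgt ⟨y, hy⟩ := py
          have pz' : φ z = rgt ⟨z, hz⟩ := pz
          show φ (y * z) = rgt (⟨y, hy⟩ * ⟨z, hz⟩)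
          rw [map_mul, map_mul, py', pz'])
        (fun y hy py => by
          have py' : φ y = rgt ⟨y, hy⟩ := py
          show φ y⁻¹ = rgt (⟨y, hy⟩⁻¹)
          rw [map_inv, map_inv, py'])
        hx
    · intro m hm1 hm2
      have hm : m.hom = φ := by
        apply cs.ext_simple
        intro i
        rw [hs i, hφ i]
        by_cases hi : (i : W) ∈ S1
        · have h1 := DFunLike.congr_fun (congrArg GrpCat.Hom.hom hm1)
            (⟨(i : W), Subgroup.subset_closure hi⟩ : ↥(Subgroup.closure S1))
          rw [hfs1 i hi]
          exact h1
        · have hi2 := hmem2 i hi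
          have h1 := DFunLike.congr_fun (congrArg GrpCat.Hom.hom hm2)
            (⟨(i : W), Subgroup.subset_closure hi2⟩ : ↥(Subgroup.closure S2))
          rw [hfs2 i hi2]
          exact h1
      exact GrpCat.hom_ext hm
  exact IsPushout.of_isColimit' ⟨weq⟩
    (Limits.PushoutCocone.IsColimit.mk weq (fun s => (key s).1) (fun s => (key s).2.1)
      (fun s => (key s).2.2.1) (fun s m h1 h2 => (key s).2.2.2 m h1 h2))
end

section
/- Every Coxeter system (W,S) of finite rank admits a reduced visual tree decomposition such that for every vertex v of the tree, the bag R_v is not separated by any complete subset of R_v, and for every edge {u,v} of the tree, the set R_u ∩ R_v is complete. -/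
universe u

variable {W : Type u} [Group W]

section JSJAuxSec
open SimpleGraph
namespace JSJAux

lemma orderOf_mul_swap {W : Type*} [Group W] (a b : W) :
    orderOf (a * b) = orderOf (b * a) := by
  have h : SemiconjBy a (b * a) (a * b) := by unfold SemiconjBy; group
  exact (h.orderOf_eq a).symm

lemma reach_del_cover {V : Type*} {G : SimpleGraph V} {u v w : V}
    (hr : G.Reachable u w) :
    (G.deleteEdges {s(u, v)}).Reachable u w ∨ (G.deleteEdges {s(u, v)}).Reachable v w := by
  rw [reachable_iff_reflTransGen] at hr
  induction hr with
  | refl => exact Or.inl (Reachable.refl _)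
  | @tail b c hb hadj ih =>
    by_cases he : s(b, c) = s(u, v)
    · rw [Sym2.eq_iff] at he
      rcases he with ⟨rfl, rfl⟩ | ⟨rfl, rfl⟩
      · exact Or.inr (Reachable.refl _)
      · exact Or.inl (Reachable.refl _)
    · have hadj' : (G.deleteEdges {s(u, v)}).Adj b c := by
        rw [SimpleGraph.deleteEdges_adj]
        exact ⟨hadj, by simpa using he⟩
      rcases ih with h | h
      · exact Or.inl (h.trans hadj'.reachable)
      · exact Or.inr (h.trans hadj'.reachable)

lemma step_off {V : Type*} {G : SimpleGraph V} (hc : G.Preconnected) {v1 w : V}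
    (hne : v1 ≠ w) :
    ∃ u, G.Adj v1 u ∧ (G.deleteEdges {s(v1, u)}).Reachable u w := by
  classical
  obtain ⟨p0⟩ := hc v1 w
  obtain ⟨pv, pp⟩ := p0.toPath
  cases pv with
  | nil => exact absurd rfl hne
  | @cons _ x _ h q =>
    rw [SimpleGraph.Walk.cons_isPath_iff] at pp
    refine ⟨x, h, ?_⟩
    have hne' : s(v1, x) ∉ q.edges := fun hmem =>
      pp.2 (SimpleGraph.Walk.fst_mem_support_of_mem_edges q hmem)
    exact ⟨q.toDeleteEdges {s(v1, x)} (by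
      intro e he hes
      rw [Set.mem_singleton_iff] at hes
      exact hne' (hes ▸ he))⟩

lemma tree_side_disjoint {V : Type*} {G : SimpleGraph V} (ht : G.IsAcyclic) {u v : V}
    (h : G.Adj u v) : ¬ (G.deleteEdges {s(u, v)}).Reachable u v := by
  have hb := (isAcyclic_iff_forall_adj_isBridge.mp ht) h
  rw [isBridge_iff] at hb
  exact hb

lemma tree_side_not_both {V : Type*} {G : SimpleGraph V} (ht : G.IsAcyclic) {u v x : V}
    (h : G.Adj u v) (h1 : (G.deleteEdges {s(u, v)}).Reachable u x)
    (h2 : (G.deleteEdges {s(u, v)}).Reachable v x) : False :=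
  tree_side_disjoint ht h (h1.trans h2.symm)


lemma reach_lift {V V' : Type*} {G : SimpleGraph V} {H : SimpleGraph V'} (f : V → V')
    (hf : ∀ a b, G.Adj a b → H.Adj (f a) (f b)) {u w : V} (h : G.Reachable u w) :
    H.Reachable (f u) (f w) := by
  rw [reachable_iff_reflTransGen] at h
  induction h with
  | refl => exact Reachable.refl _
  | @tail b c hb hadj ih => exact ih.trans (hf _ _ hadj).reachable

variable {V1 V2 : Type}

def glueAdj (T1 : SimpleGraph V1) (T2 : SimpleGraph V2) (v1 : V1) (v2 : V2) :
    V1 ⊕ V2 → V1 ⊕ V2 → Prop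
  | .inl a, .inl b => T1.Adj a b
  | .inr a, .inr b => T2.Adj a b
  | .inl a, .inr b => a = v1 ∧ b = v2
  | .inr a, .inl b => b = v1 ∧ a = v2

def glue (T1 : SimpleGraph V1) (T2 : SimpleGraph V2) (v1 : V1) (v2 : V2) :
    SimpleGraph (V1 ⊕ V2) where
  Adj := glueAdj T1 T2 v1 v2
  symm := ⟨by
    rintro (a | a) (b | b) h
    · exact (show T1.Adj a b from h).symm
    · exact h
    · exact h
    · exact (show T2.Adj a b from h).symm⟩
  loopless := ⟨by
    rintro (a | a) h
    · exact T1.loopless.irrefl a h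
    · exact T2.loopless.irrefl a h⟩

variable {T1 : SimpleGraph V1} {T2 : SimpleGraph V2} {v1 : V1} {v2 : V2}

lemma glue_adj_inl_inl {a b : V1} :
    (glue T1 T2 v1 v2).Adj (.inl a) (.inl b) ↔ T1.Adj a b := Iff.rfl

lemma glue_adj_inr_inr {a b : V2} :
    (glue T1 T2 v1 v2).Adj (.inr a) (.inr b) ↔ T2.Adj a b := Iff.rfl

lemma glue_adj_inl_inr {a : V1} {b : V2} :
    (glue T1 T2 v1 v2).Adj (.inl a) (.inr b) ↔ a = v1 ∧ b = v2 := Iff.rfl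

lemma glue_adj_inr_inl {a : V2} {b : V1} :
    (glue T1 T2 v1 v2).Adj (.inr a) (.inl b) ↔ b = v1 ∧ a = v2 := Iff.rfl

lemma glue_adj_bridge : (glue T1 T2 v1 v2).Adj (.inl v1) (.inr v2) := ⟨rfl, rfl⟩

lemma glue_reach_bridge_inl (h1 : T1.Preconnected) :
    {x | ((glue T1 T2 v1 v2).deleteEdges {s(Sum.inl v1, Sum.inr v2)}).Reachable (Sum.inl v1) x}
      = Set.range Sum.inl := by
  ext x
  simp only [Set.mem_setOf_eq, Set.mem_range]
  constructor
  · intro hx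
    rw [reachable_iff_reflTransGen] at hx
    induction hx with
    | refl => exact ⟨v1, rfl⟩
    | @tail b c hb hadj ih =>
      obtain ⟨a, rfl⟩ := ih
      rw [SimpleGraph.deleteEdges_adj] at hadj
      obtain ⟨hadj1, hne⟩ := hadj
      cases c with
      | inl b => exact ⟨b, rfl⟩
      | inr b =>
        obtain ⟨rfl, rfl⟩ := (glue_adj_inl_inr).mp hadj1
        exact absurd rfl hne
  · rintro ⟨a, rfl⟩
    refine reach_lift Sum.inl (fun x y h => ?_) (h1 v1 a)
    rw [SimpleGraph.deleteEdges_adj]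
    exact ⟨h, by simp [Sym2.eq_iff]⟩

lemma glue_reach_bridge_inr (h2 : T2.Preconnected) :
    {x | ((glue T1 T2 v1 v2).deleteEdges {s(Sum.inl v1, Sum.inr v2)}).Reachable (Sum.inr v2) x}
      = Set.range Sum.inr := by
  ext x
  simp only [Set.mem_setOf_eq, Set.mem_range]
  constructor
  · intro hx
    rw [reachable_iff_reflTransGen] at hx
    induction hx with
    | refl => exact ⟨v2, rfl⟩
    | @tail b c hb hadj ih =>
      obtain ⟨a, rfl⟩ := ih
      rw [SimpleGraph.deleteEdges_adj] at hadj
      obtain ⟨hadj1, hne⟩ := hadj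
      cases c with
      | inr b => exact ⟨b, rfl⟩
      | inl b =>
        obtain ⟨rfl, rfl⟩ := (glue_adj_inr_inl).mp hadj1
        exact (hne (by rw [Set.mem_singleton_iff, Sym2.eq_swap])).elim
  · rintro ⟨a, rfl⟩
    refine reach_lift Sum.inr (fun x y h => ?_) (h2 v2 a)
    rw [SimpleGraph.deleteEdges_adj]
    exact ⟨h, by simp [Sym2.eq_iff]⟩

lemma glue_reach_internal_inl_mem {u u' : V1}
    (hv1 : (T1.deleteEdges {s(u, u')}).Reachable u v1) (h2 : T2.Preconnected) :
    {x | ((glue T1 T2 v1 v2).deleteEdges {s(Sum.inl u, Sum.inl u')}).Reachable (Sum.inl u) x}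
      = Sum.inl '' {a | (T1.deleteEdges {s(u, u')}).Reachable u a} ∪ Set.range Sum.inr := by
  have lift1 : ∀ {a : V1}, (T1.deleteEdges {s(u, u')}).Reachable u a →
      ((glue T1 T2 v1 v2).deleteEdges {s(Sum.inl u, Sum.inl u')}).Reachable
        (Sum.inl u) (Sum.inl a) := by
    intro a ha
    refine reach_lift Sum.inl (fun x y h => ?_) ha
    rw [SimpleGraph.deleteEdges_adj] at h ⊢
    refine ⟨h.1, ?_⟩
    simp only [Set.mem_singleton_iff, Sym2.eq_iff, Sum.inl.injEq] at h ⊢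
    exact h.2
  ext x
  simp only [Set.mem_setOf_eq, Set.mem_union, Set.mem_image, Set.mem_range, Set.mem_setOf_eq]
  constructor
  · intro hx
    rw [reachable_iff_reflTransGen] at hx
    induction hx with
    | refl => exact Or.inl ⟨u, Reachable.refl u, rfl⟩
    | @tail b c hb hadj ih =>
      rw [SimpleGraph.deleteEdges_adj] at hadj
      obtain ⟨hadj1, hne⟩ := hadj
      rcases ih with ⟨a, ha, rfl⟩ | ⟨a, rfl⟩
      · cases c with
        | inl b' =>
          refine Or.inl ⟨b', ha.trans (Adj.reachable ?_), rfl⟩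
          rw [SimpleGraph.deleteEdges_adj]
          refine ⟨(glue_adj_inl_inl).mp hadj1, ?_⟩
          simp only [Set.mem_singleton_iff, Sym2.eq_iff, Sum.inl.injEq] at hne ⊢
          exact hne
        | inr b' => exact Or.inr ⟨b', rfl⟩
      · cases c with
        | inl b' =>
          obtain ⟨rfl, rfl⟩ := (glue_adj_inr_inl).mp hadj1
          exact Or.inl ⟨_, hv1, rfl⟩
        | inr b' => exact Or.inr ⟨b', rfl⟩
  · rintro (⟨a, ha, rfl⟩ | ⟨b, rfl⟩)
    · exact lift1 ha
    · have hbr : ((glue T1 T2 v1 v2).deleteEdges {s(Sum.inl u, Sum.inl u')}).Adj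
          (Sum.inl v1) (Sum.inr v2) := by
        rw [SimpleGraph.deleteEdges_adj]
        exact ⟨glue_adj_bridge, by simp [Sym2.eq_iff]⟩
      refine ((lift1 hv1).trans hbr.reachable).trans ?_
      refine reach_lift Sum.inr (fun x y h => ?_) (h2 v2 b)
      rw [SimpleGraph.deleteEdges_adj]
      exact ⟨h, by simp [Sym2.eq_iff]⟩

lemma glue_reach_internal_inl_notmem {u u' : V1}
    (hv1 : ¬ (T1.deleteEdges {s(u, u')}).Reachable u v1) :
    {x | ((glue T1 T2 v1 v2).deleteEdges {s(Sum.inl u, Sum.inl u')}).Reachable (Sum.inl u) x}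
      = Sum.inl '' {a | (T1.deleteEdges {s(u, u')}).Reachable u a} := by
  ext x
  simp only [Set.mem_setOf_eq, Set.mem_image, Set.mem_setOf_eq]
  constructor
  · intro hx
    rw [reachable_iff_reflTransGen] at hx
    induction hx with
    | refl => exact ⟨u, Reachable.refl u, rfl⟩
    | @tail b c hb hadj ih =>
      obtain ⟨a, ha, rfl⟩ := ih
      rw [SimpleGraph.deleteEdges_adj] at hadj
      obtain ⟨hadj1, hne⟩ := hadj
      cases c with
      | inl b' =>
        refine ⟨b', ha.trans (Adj.reachable ?_), rfl⟩
        rw [SimpleGraph.deleteEdges_adj]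
        refine ⟨(glue_adj_inl_inl).mp hadj1, ?_⟩
        simp only [Set.mem_singleton_iff, Sym2.eq_iff, Sum.inl.injEq] at hne ⊢
        exact hne
      | inr b' =>
        obtain ⟨rfl, rfl⟩ := (glue_adj_inl_inr).mp hadj1
        exact absurd ha hv1
  · rintro ⟨a, ha, rfl⟩
    refine reach_lift Sum.inl (fun x y h => ?_) ha
    rw [SimpleGraph.deleteEdges_adj] at h ⊢
    refine ⟨h.1, ?_⟩
    simp only [Set.mem_singleton_iff, Sym2.eq_iff, Sum.inl.injEq] at h ⊢
    exact h.2

lemma glue_reach_internal_inr_mem {u u' : V2}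
    (hv2 : (T2.deleteEdges {s(u, u')}).Reachable u v2) (h1 : T1.Preconnected) :
    {x | ((glue T1 T2 v1 v2).deleteEdges {s(Sum.inr u, Sum.inr u')}).Reachable (Sum.inr u) x}
      = Sum.inr '' {a | (T2.deleteEdges {s(u, u')}).Reachable u a} ∪ Set.range Sum.inl := by
  have lift2 : ∀ {a : V2}, (T2.deleteEdges {s(u, u')}).Reachable u a →
      ((glue T1 T2 v1 v2).deleteEdges {s(Sum.inr u, Sum.inr u')}).Reachable
        (Sum.inr u) (Sum.inr a) := by
    intro a ha
    refine reach_lift Sum.inr (fun x y h => ?_) ha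
    rw [SimpleGraph.deleteEdges_adj] at h ⊢
    refine ⟨h.1, ?_⟩
    simp only [Set.mem_singleton_iff, Sym2.eq_iff, Sum.inr.injEq] at h ⊢
    exact h.2
  ext x
  simp only [Set.mem_setOf_eq, Set.mem_union, Set.mem_image, Set.mem_range, Set.mem_setOf_eq]
  constructor
  · intro hx
    rw [reachable_iff_reflTransGen] at hx
    induction hx with
    | refl => exact Or.inl ⟨u, Reachable.refl u, rfl⟩
    | @tail b c hb hadj ih =>
      rw [SimpleGraph.deleteEdges_adj] at hadj
      obtain ⟨hadj1, hne⟩ := hadj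
      rcases ih with ⟨a, ha, rfl⟩ | ⟨a, rfl⟩
      · cases c with
        | inr b' =>
          refine Or.inl ⟨b', ha.trans (Adj.reachable ?_), rfl⟩
          rw [SimpleGraph.deleteEdges_adj]
          refine ⟨(glue_adj_inr_inr).mp hadj1, ?_⟩
          simp only [Set.mem_singleton_iff, Sym2.eq_iff, Sum.inr.injEq] at hne ⊢
          exact hne
        | inl b' => exact Or.inr ⟨b', rfl⟩
      · cases c with
        | inr b' =>
          obtain ⟨rfl, rfl⟩ := (glue_adj_inl_inr).mp hadj1
          exact Or.inl ⟨_, hv2, rfl⟩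
        | inl b' => exact Or.inr ⟨b', rfl⟩
  · rintro (⟨a, ha, rfl⟩ | ⟨b, rfl⟩)
    · exact lift2 ha
    · have hbr : ((glue T1 T2 v1 v2).deleteEdges {s(Sum.inr u, Sum.inr u')}).Adj
          (Sum.inr v2) (Sum.inl v1) := by
        rw [SimpleGraph.deleteEdges_adj]
        exact ⟨(glue_adj_inr_inl).mpr ⟨rfl, rfl⟩, by simp [Sym2.eq_iff]⟩
      refine ((lift2 hv2).trans hbr.reachable).trans ?_
      refine reach_lift Sum.inl (fun x y h => ?_) (h1 v1 b)
      rw [SimpleGraph.deleteEdges_adj]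
      exact ⟨h, by simp [Sym2.eq_iff]⟩

lemma glue_reach_internal_inr_notmem {u u' : V2}
    (hv2 : ¬ (T2.deleteEdges {s(u, u')}).Reachable u v2) :
    {x | ((glue T1 T2 v1 v2).deleteEdges {s(Sum.inr u, Sum.inr u')}).Reachable (Sum.inr u) x}
      = Sum.inr '' {a | (T2.deleteEdges {s(u, u')}).Reachable u a} := by
  ext x
  simp only [Set.mem_setOf_eq, Set.mem_image, Set.mem_setOf_eq]
  constructor
  · intro hx
    rw [reachable_iff_reflTransGen] at hx
    induction hx with
    | refl => exact ⟨u, Reachable.refl u, rfl⟩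
    | @tail b c hb hadj ih =>
      obtain ⟨a, ha, rfl⟩ := ih
      rw [SimpleGraph.deleteEdges_adj] at hadj
      obtain ⟨hadj1, hne⟩ := hadj
      cases c with
      | inr b' =>
        refine ⟨b', ha.trans (Adj.reachable ?_), rfl⟩
        rw [SimpleGraph.deleteEdges_adj]
        refine ⟨(glue_adj_inr_inr).mp hadj1, ?_⟩
        simp only [Set.mem_singleton_iff, Sym2.eq_iff, Sum.inr.injEq] at hne ⊢
        exact hne
      | inl b' =>
        obtain ⟨rfl, rfl⟩ := (glue_adj_inr_inl).mp hadj1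
        exact absurd ha hv2
  · rintro ⟨a, ha, rfl⟩
    refine reach_lift Sum.inr (fun x y h => ?_) ha
    rw [SimpleGraph.deleteEdges_adj] at h ⊢
    refine ⟨h.1, ?_⟩
    simp only [Set.mem_singleton_iff, Sym2.eq_iff, Sum.inr.injEq] at h ⊢
    exact h.2

lemma glue_connected (h1 : T1.Connected) (h2 : T2.Connected) :
    (glue T1 T2 v1 v2).Connected := by
  have hp1 := h1.preconnected
  have hp2 := h2.preconnected
  have hcen : ∀ x, (glue T1 T2 v1 v2).Reachable x (.inl v1) := by
    intro x
    cases x with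
    | inl a => exact reach_lift Sum.inl (fun a b h => h) (hp1 a v1)
    | inr b =>
      exact (reach_lift Sum.inr (fun a b h => h) (hp2 b v2)).trans
        ((glue_adj_inr_inl.mpr ⟨rfl, rfl⟩).reachable)
  rw [connected_iff]
  exact ⟨fun x y => (hcen x).trans (hcen y).symm, ⟨.inl v1⟩⟩

lemma glue_isTree (h1 : T1.IsTree) (h2 : T2.IsTree) : (glue T1 T2 v1 v2).IsTree := by
  have hp1 := h1.isConnected.preconnected
  have hp2 := h2.isConnected.preconnected
  constructor
  · exact glue_connected h1.isConnected h2.isConnected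
  · rw [isAcyclic_iff_forall_adj_isBridge]
    rintro (a | a) (b | b) hadj
    · rw [isBridge_iff]
      intro hr
      have hr' : ((glue T1 T2 v1 v2).deleteEdges {s(Sum.inl a, Sum.inl b)}).Reachable
          (Sum.inl a) (Sum.inl b) := hr
      have hadj1 : T1.Adj a b := hadj
      by_cases hv : (T1.deleteEdges {s(a, b)}).Reachable a v1
      · have hmem : (Sum.inl b : V1 ⊕ V2) ∈
            {x | ((glue T1 T2 v1 v2).deleteEdges {s(Sum.inl a, Sum.inl b)}).Reachable
              (Sum.inl a) x} := hr'
        rw [glue_reach_internal_inl_mem hv hp2] at hmem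
        rcases hmem with ⟨c, hc, heq⟩ | ⟨c, heq⟩
        · rw [Sum.inl.injEq] at heq
          exact tree_side_disjoint h1.IsAcyclic hadj1 (heq ▸ hc)
        · exact absurd heq (by simp)
      · have hmem : (Sum.inl b : V1 ⊕ V2) ∈
            {x | ((glue T1 T2 v1 v2).deleteEdges {s(Sum.inl a, Sum.inl b)}).Reachable
              (Sum.inl a) x} := hr'
        rw [glue_reach_internal_inl_notmem hv] at hmem
        obtain ⟨c, hc, heq⟩ := hmem
        rw [Sum.inl.injEq] at heq
        exact tree_side_disjoint h1.IsAcyclic hadj1 (heq ▸ hc)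
    · obtain ⟨rfl, rfl⟩ := (glue_adj_inl_inr (T1 := T1) (T2 := T2)).mp hadj
      rw [isBridge_iff]
      intro hr
      have hmem : (Sum.inr b : V1 ⊕ V2) ∈
          {x | ((glue T1 T2 a b).deleteEdges {s(Sum.inl a, Sum.inr b)}).Reachable
            (Sum.inl a) x} := hr
      rw [glue_reach_bridge_inl hp1] at hmem
      obtain ⟨c, heq⟩ := hmem
      exact absurd heq (by simp)
    · obtain ⟨rfl, rfl⟩ := (glue_adj_inr_inl (T1 := T1) (T2 := T2)).mp hadj
      rw [Sym2.eq_swap, isBridge_iff]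
      intro hr
      have hmem : (Sum.inr a : V1 ⊕ V2) ∈
          {x | ((glue T1 T2 b a).deleteEdges {s(Sum.inl b, Sum.inr a)}).Reachable
            (Sum.inl b) x} := hr
      rw [glue_reach_bridge_inl hp1] at hmem
      obtain ⟨c, heq⟩ := hmem
      exact absurd heq (by simp)
    · rw [isBridge_iff]
      intro hr
      have hr' : ((glue T1 T2 v1 v2).deleteEdges {s(Sum.inr a, Sum.inr b)}).Reachable
          (Sum.inr a) (Sum.inr b) := hr
      have hadj1 : T2.Adj a b := hadj
      by_cases hv : (T2.deleteEdges {s(a, b)}).Reachable a v2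
      · have hmem : (Sum.inr b : V1 ⊕ V2) ∈
            {x | ((glue T1 T2 v1 v2).deleteEdges {s(Sum.inr a, Sum.inr b)}).Reachable
              (Sum.inr a) x} := hr'
        rw [glue_reach_internal_inr_mem hv hp1] at hmem
        rcases hmem with ⟨c, hc, heq⟩ | ⟨c, heq⟩
        · rw [Sum.inr.injEq] at heq
          exact tree_side_disjoint h2.IsAcyclic hadj1 (heq ▸ hc)
        · exact absurd heq (by simp)
      · have hmem : (Sum.inr b : V1 ⊕ V2) ∈
            {x | ((glue T1 T2 v1 v2).deleteEdges {s(Sum.inr a, Sum.inr b)}).Reachable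
              (Sum.inr a) x} := hr'
        rw [glue_reach_internal_inr_notmem hv] at hmem
        obtain ⟨c, hc, heq⟩ := hmem
        rw [Sum.inr.injEq] at heq
        exact tree_side_disjoint h2.IsAcyclic hadj1 (heq ▸ hc)


lemma presGraph_adj {A : Set W} {x y : W} :
    (presGraph W A).Adj x y ↔ x ≠ y ∧ x ∈ A ∧ y ∈ A ∧ orderOf (x * y) ≠ 0 := Iff.rfl

lemma presGraph_mono {A B : Set W} (h : A ⊆ B) : presGraph W A ≤ presGraph W B := by
  intro x y hxy
  exact ⟨hxy.1, h hxy.2.1, h hxy.2.2.1, hxy.2.2.2⟩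

lemma reach_mem {A : Set W} {a y : W} (ha : a ∈ A)
    (h : (presGraph W A).Reachable a y) : y ∈ A := by
  rw [reachable_iff_reflTransGen] at h
  induction h with
  | refl => exact ha
  | @tail b c hb hadj ih => exact hadj.2.2.1

lemma reach_restrict {A B : Set W} {a : W} (ha : a ∈ B)
    (hcl : ∀ y, (presGraph W A).Reachable a y → y ∈ B) :
    ∀ y, (presGraph W A).Reachable a y → (presGraph W B).Reachable a y := by
  intro y hy
  rw [reachable_iff_reflTransGen] at hy
  induction hy with
  | refl => exact Reachable.refl a
  | @tail y z hy hadj ih =>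
    have h1 : y ∈ B := hcl y (by rw [reachable_iff_reflTransGen]; exact hy)
    have h2 : z ∈ B := hcl z (by rw [reachable_iff_reflTransGen]; exact hy.tail hadj)
    exact ih.trans (Adj.reachable ⟨hadj.1, h1, h2, hadj.2.2.2⟩)

lemma edgeSide_def {V : Type} (T : SimpleGraph V) (bag : V → Set W) (u v : V) :
    edgeSide T bag u v
      = ⋃ w ∈ {w | (T.deleteEdges {s(u, v)}).Reachable u w}, bag w := rfl

lemma bag_subset_edgeSide {V : Type} (T : SimpleGraph V) (bag : V → Set W) {u v w : V}
    (hw : (T.deleteEdges {s(u, v)}).Reachable u w) : bag w ⊆ edgeSide T bag u v :=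
  fun x hx => Set.mem_biUnion hw hx

lemma edgeSide_subset {V : Type} (T : SimpleGraph V) (bag : V → Set W) (u v : V) :
    edgeSide T bag u v ⊆ ⋃ w, bag w :=
  Set.iUnion₂_subset fun w _ => Set.subset_iUnion bag w

lemma edgeSide_cover {S : Set W} (D : VisualTreeDecomp W S) (u v : D.V) :
    S ⊆ edgeSide D.T D.bag u v ∪ edgeSide D.T D.bag v u := by
  intro x hx
  rw [← D.bags_cover] at hx
  obtain ⟨w, hw⟩ := Set.mem_iUnion.mp hx
  rcases reach_del_cover (v := v) (D.isTree.isConnected.preconnected u w) with h | h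
  · exact Or.inl (Set.mem_biUnion h hw)
  · rw [Sym2.eq_swap] at h
    exact Or.inr (Set.mem_biUnion h hw)

lemma exists_bag_ssuperset {S' : Set W} (D : VisualTreeDecomp W S') (hred : D.Reduced)
    {T X : Set W} {v1 : D.V} (hTv1 : T ⊆ D.bag v1) (hX : X ⊆ S' \ T) {x0 : W} (hx0 : x0 ∈ X)
    (hXconn : ∀ x ∈ X, (presGraph W (S' \ T)).Reachable x0 x)
    (hnb : ∀ t ∈ T, ∃ x ∈ X, orderOf (t * x) ≠ 0) :
    ∃ u, T ⊂ D.bag u := by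
  by_cases hv1 : T = D.bag v1
  swap
  · exact ⟨v1, ssubset_of_subset_of_ne hTv1 hv1⟩
  have hx0S : x0 ∈ S' := (hX hx0).1
  have hx0' : x0 ∈ ⋃ v, D.bag v := by rw [D.bags_cover]; exact hx0S
  obtain ⟨w, hw⟩ := Set.mem_iUnion.mp hx0'
  have hwv1 : v1 ≠ w := by
    rintro rfl
    exact (hX hx0).2 (hv1 ▸ hw)
  obtain ⟨u, huadj, hureach⟩ := step_off D.isTree.isConnected.preconnected hwv1
  rw [Sym2.eq_swap] at hureach
  have hIE : edgeSide D.T D.bag u v1 ∩ edgeSide D.T D.bag v1 u = D.bag u ∩ D.bag v1 :=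
    D.inter_eq u v1 huadj.symm
  have hIO := D.infinite_order u v1 huadj.symm
  have hx0A : x0 ∈ edgeSide D.T D.bag u v1 := bag_subset_edgeSide _ _ hureach hw
  have hcov := edgeSide_cover D u v1
  have hXA : ∀ x, (presGraph W (S' \ T)).Reachable x0 x → x ∈ edgeSide D.T D.bag u v1 := by
    intro x hx
    rw [reachable_iff_reflTransGen] at hx
    induction hx with
    | refl => exact hx0A
    | @tail y z hy hadj ih =>
      have hzS : z ∈ S' \ T := hadj.2.2.1
      have hyS : y ∈ S' \ T := hadj.2.1
      rcases hcov hzS.1 with hz | hz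
      · exact hz
      · by_cases hzA : z ∈ edgeSide D.T D.bag u v1
        · exact hzA
        · exfalso
          have hyI : y ∉ D.bag u ∩ D.bag v1 := fun hy' => hyS.2 (hv1 ▸ hy'.2)
          have hzI : z ∉ D.bag u ∩ D.bag v1 := fun hz' => hzS.2 (hv1 ▸ hz'.2)
          exact hadj.2.2.2 (hIO y ⟨ih, hyI⟩ z ⟨hz, hzI⟩)
  have hTu : T ⊆ D.bag u ∩ D.bag v1 := by
    intro t ht
    obtain ⟨x, hxX, hord⟩ := hnb t ht
    have hxA : x ∈ edgeSide D.T D.bag u v1 := hXA x (hXconn x hxX)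
    have htB : t ∈ edgeSide D.T D.bag v1 u :=
      bag_subset_edgeSide _ _ (Reachable.refl v1) (hTv1 ht)
    by_cases htA : t ∈ edgeSide D.T D.bag u v1
    · rw [← hIE]; exact ⟨htA, htB⟩
    · exfalso
      have hxI : x ∉ D.bag u ∩ D.bag v1 := fun h => (hX hxX).2 (hv1 ▸ h.2)
      have htI : t ∉ D.bag u ∩ D.bag v1 := by
        intro h
        rw [← hIE] at h
        exact htA h.1
      have h0 := hIO x ⟨hxA, hxI⟩ t ⟨htB, htI⟩
      rw [orderOf_mul_swap] at h0
      exact hord h0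
  exact ⟨u, lt_of_le_of_lt hTu ((hred u v1 huadj.symm).1)⟩

lemma sep_neighbor {S T : Set W} {a b t : W} (ht : t ∈ T)
    (hAB : IsABSeparator W S T a b)
    (hmin : ¬ IsABSeparator W S (T \ {t}) a b) :
    ∃ x, x ∈ S \ T ∧ (presGraph W (S \ T)).Reachable a x ∧ orderOf (t * x) ≠ 0 := by
  obtain ⟨⟨haS, haT⟩, ⟨hbS, hbT⟩, hnr⟩ := hAB
  have haT' : a ∈ S \ (T \ {t}) := ⟨haS, fun h => haT h.1⟩
  have hbT' : b ∈ S \ (T \ {t}) := ⟨hbS, fun h => hbT h.1⟩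
  have hreach : (presGraph W (S \ (T \ {t}))).Reachable a b := by
    by_contra hc; exact hmin ⟨haT', hbT', hc⟩
  have key : ∀ y, (presGraph W (S \ (T \ {t}))).Reachable a y →
      (presGraph W (S \ T)).Reachable a y ∨
        ∃ x, x ∈ S \ T ∧ (presGraph W (S \ T)).Reachable a x ∧ orderOf (t * x) ≠ 0 := by
    intro y hy
    rw [reachable_iff_reflTransGen] at hy
    induction hy with
    | refl => exact Or.inl (Reachable.refl a)
    | @tail y z hy hadj ih =>
      rcases ih with hrey | hgoal
      · have hyT : y ∈ S \ T := reach_mem ⟨haS, haT⟩ hrey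
        by_cases hz : z = t
        · subst hz
          refine Or.inr ⟨y, hyT, hrey, ?_⟩
          rw [orderOf_mul_swap]
          exact hadj.2.2.2
        · have hzT : z ∈ S \ T := ⟨hadj.2.2.1.1, fun hzT' => hadj.2.2.1.2 ⟨hzT', hz⟩⟩
          exact Or.inl (hrey.trans (Adj.reachable ⟨hadj.1, hyT, hzT, hadj.2.2.2⟩))
      · exact Or.inr hgoal
  rcases key b hreach with h | h
  · exact absurd h hnr
  · exact h

lemma exists_min_absep {S : Set W} (hfin : S.Finite) (hsep : SeparatedByComplete W S) :
    ∃ T a b, T ⊆ S ∧ IsCompleteSet W T ∧ IsABSeparator W S T a b ∧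
      ∀ T' ⊂ T, ¬ IsABSeparator W S T' a b := by
  obtain ⟨T0, hT0S, hT0c, a, haST, b, hbST, hnr⟩ := hsep
  have main : ∀ n (T : Set W), T ⊆ T0 → T.ncard ≤ n → IsABSeparator W S T a b →
      ∃ T', T' ⊆ T ∧ IsABSeparator W S T' a b ∧ ∀ T'' ⊂ T', ¬ IsABSeparator W S T'' a b := by
    intro n
    induction n with
    | zero =>
      intro T hsub hcard hAB
      have hTfin : T.Finite := (hfin.subset hT0S).subset hsub
      have hT0 : T = ∅ := by
        rw [← Set.ncard_eq_zero hTfin]; omega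
      refine ⟨T, le_refl _, hAB, ?_⟩
      intro T'' hss
      rw [hT0] at hss
      exact (hss.ne (Set.subset_empty_iff.mp hss.subset)).elim
    | succ n ih =>
      intro T hsub hcard hAB
      by_cases h : ∃ T' ⊂ T, IsABSeparator W S T' a b
      · obtain ⟨T', hT't, hAB'⟩ := h
        have hfinT : T.Finite := (hfin.subset hT0S).subset hsub
        have hlt : T'.ncard ≤ n := by
          have := Set.ncard_lt_ncard hT't hfinT
          omega
        obtain ⟨T'', h1, h2, h3⟩ := ih T' (hT't.subset.trans hsub) hlt hAB'
        exact ⟨T'', h1.trans hT't.subset, h2, h3⟩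
      · push_neg at h
        exact ⟨T, le_refl _, hAB, fun T'' hss hAB'' => (h T'' hss) hAB''⟩
  obtain ⟨T, hTsub, hAB, hmin⟩ := main T0.ncard T0 (le_refl _) (le_refl _) ⟨haST, hbST, hnr⟩
  exact ⟨T, a, b, hTsub.trans hT0S,
    fun s hs t ht => hT0c s (hTsub hs) t (hTsub ht), hAB, hmin⟩

def Pkg (S : Set W) : Prop :=
  ∃ D : VisualTreeDecomp W S, D.Reduced ∧ (∀ v, ¬ SeparatedByComplete W (D.bag v)) ∧
    (∀ u v, D.T.Adj u v → IsCompleteSet W (D.bag u ∩ D.bag v)) ∧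
    (∀ C, C ⊆ S → IsCompleteSet W C → ∃ v, C ⊆ D.bag v)

lemma pkg_single {S : Set W} (hns : ¬ SeparatedByComplete W S) : Pkg S := by
  have hconn : (⊥ : SimpleGraph Unit).Connected := by
    rw [connected_iff]
    refine ⟨fun a b => ?_, ⟨()⟩⟩
    cases a; cases b; exact Reachable.refl _
  refine ⟨{ V := Unit,
            fintypeV := inferInstance,
            T := ⊥,
            isTree := ⟨hconn, isAcyclic_bot⟩,
            bag := fun _ => S,
            bag_subset := fun _ => le_refl _,
            bags_cover := Set.iUnion_const S,
            inter_eq := fun u v h => absurd h (by simp),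
            infinite_order := fun u v h => absurd h (by simp) },
    fun u v h => absurd h (by simp), fun _ => hns, fun u v h => absurd h (by simp),
    fun C hC _ => ⟨(), hC⟩⟩

lemma glue_pkg {S S1 S2 T : Set W} (hS : S1 ∪ S2 = S) (hI : S1 ∩ S2 = T)
    (hcross : ∀ x ∈ S1 \ T, ∀ y ∈ S2 \ T, orderOf (x * y) = 0)
    (hTc : IsCompleteSet W T)
    (D1 : VisualTreeDecomp W S1) (hred1 : D1.Reduced)
    (hunsep1 : ∀ v, ¬ SeparatedByComplete W (D1.bag v))
    (hec1 : ∀ u v, D1.T.Adj u v → IsCompleteSet W (D1.bag u ∩ D1.bag v))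
    (hcb1 : ∀ C, C ⊆ S1 → IsCompleteSet W C → ∃ v, C ⊆ D1.bag v)
    (D2 : VisualTreeDecomp W S2) (hred2 : D2.Reduced)
    (hunsep2 : ∀ v, ¬ SeparatedByComplete W (D2.bag v))
    (hec2 : ∀ u v, D2.T.Adj u v → IsCompleteSet W (D2.bag u ∩ D2.bag v))
    (hcb2 : ∀ C, C ⊆ S2 → IsCompleteSet W C → ∃ v, C ⊆ D2.bag v)
    (v1 : D1.V) (v2 : D2.V) (hv1 : T ⊂ D1.bag v1) (hv2 : T ⊂ D2.bag v2) : Pkg S := by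
  letI : Fintype D1.V := D1.fintypeV
  letI : Fintype D2.V := D2.fintypeV
  have hp1 := D1.isTree.isConnected.preconnected
  have hp2 := D2.isTree.isConnected.preconnected
  have hS1S : S1 ⊆ S := by rw [← hS]; exact Set.subset_union_left
  have hS2S : S2 ⊆ S := by rw [← hS]; exact Set.subset_union_right
  have hTS1 : T ⊆ S1 := by rw [← hI]; exact Set.inter_subset_left
  have hTS2 : T ⊆ S2 := by rw [← hI]; exact Set.inter_subset_right
  have hTb1 : T ⊆ D1.bag v1 := hv1.subset
  have hTb2 : T ⊆ D2.bag v2 := hv2.subset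
  set G := glue D1.T D2.T v1 v2 with hG
  set bagS : D1.V ⊕ D2.V → Set W := Sum.elim D1.bag D2.bag with hbagS
  have hES1 : ∀ a b : D1.V, edgeSide D1.T D1.bag a b ⊆ S1 := fun a b =>
    (edgeSide_subset D1.T D1.bag a b).trans D1.bags_cover.le
  have hES2 : ∀ a b : D2.V, edgeSide D2.T D2.bag a b ⊆ S2 := fun a b =>
    (edgeSide_subset D2.T D2.bag a b).trans D2.bags_cover.le
  -- edgeSide computations
  have ESll_mem : ∀ a b : D1.V, (D1.T.deleteEdges {s(a, b)}).Reachable a v1 →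
      edgeSide G bagS (Sum.inl a) (Sum.inl b) = edgeSide D1.T D1.bag a b ∪ S2 := by
    intro a b hv
    rw [edgeSide_def, glue_reach_internal_inl_mem hv hp2, Set.biUnion_union,
        Set.biUnion_image, Set.biUnion_range]
    simp only [hbagS, Sum.elim_inl, Sum.elim_inr]
    rw [D2.bags_cover]
    rfl
  have ESll_not : ∀ a b : D1.V, ¬ (D1.T.deleteEdges {s(a, b)}).Reachable a v1 →
      edgeSide G bagS (Sum.inl a) (Sum.inl b) = edgeSide D1.T D1.bag a b := by
    intro a b hv
    rw [edgeSide_def, glue_reach_internal_inl_notmem hv, Set.biUnion_image]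
    simp only [hbagS, Sum.elim_inl]
    rfl
  have ESrr_mem : ∀ a b : D2.V, (D2.T.deleteEdges {s(a, b)}).Reachable a v2 →
      edgeSide G bagS (Sum.inr a) (Sum.inr b) = edgeSide D2.T D2.bag a b ∪ S1 := by
    intro a b hv
    rw [edgeSide_def, glue_reach_internal_inr_mem hv hp1, Set.biUnion_union,
        Set.biUnion_image, Set.biUnion_range]
    simp only [hbagS, Sum.elim_inl, Sum.elim_inr]
    rw [D1.bags_cover]
    rfl
  have ESrr_not : ∀ a b : D2.V, ¬ (D2.T.deleteEdges {s(a, b)}).Reachable a v2 →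
      edgeSide G bagS (Sum.inr a) (Sum.inr b) = edgeSide D2.T D2.bag a b := by
    intro a b hv
    rw [edgeSide_def, glue_reach_internal_inr_notmem hv, Set.biUnion_image]
    simp only [hbagS, Sum.elim_inr]
    rfl
  have ESbl : edgeSide G bagS (Sum.inl v1) (Sum.inr v2) = S1 := by
    rw [edgeSide_def, glue_reach_bridge_inl hp1, Set.biUnion_range]
    simp only [hbagS, Sum.elim_inl]
    exact D1.bags_cover
  have ESbr : edgeSide G bagS (Sum.inr v2) (Sum.inl v1) = S2 := by
    rw [edgeSide_def,
      show (s(Sum.inr v2, Sum.inl v1) : Sym2 (D1.V ⊕ D2.V)) = s(Sum.inl v1, Sum.inr v2)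
        from Sym2.eq_swap,
      glue_reach_bridge_inr hp2, Set.biUnion_range]
    simp only [hbagS, Sum.elim_inr]
    exact D2.bags_cover
  have hbag12 : D1.bag v1 ∩ D2.bag v2 = T := by
    apply Set.Subset.antisymm
    · intro x hx
      rw [← hI]
      exact ⟨D1.bag_subset v1 hx.1, D2.bag_subset v2 hx.2⟩
    · exact Set.subset_inter hTb1 hTb2
  -- the two sides for an inl-inl edge
  have inl_sides : ∀ a b : D1.V, D1.T.Adj a b →
      (edgeSide G bagS (Sum.inl a) (Sum.inl b) = edgeSide D1.T D1.bag a b ∪ S2 ∧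
        edgeSide G bagS (Sum.inl b) (Sum.inl a) = edgeSide D1.T D1.bag b a ∧
        T ⊆ edgeSide D1.T D1.bag a b) ∨
      (edgeSide G bagS (Sum.inl a) (Sum.inl b) = edgeSide D1.T D1.bag a b ∧
        edgeSide G bagS (Sum.inl b) (Sum.inl a) = edgeSide D1.T D1.bag b a ∪ S2 ∧
        T ⊆ edgeSide D1.T D1.bag b a) := by
    intro a b hab
    by_cases hv : (D1.T.deleteEdges {s(a, b)}).Reachable a v1
    · left
      have hv' : ¬ (D1.T.deleteEdges {s(b, a)}).Reachable b v1 := by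
        intro h
        rw [Sym2.eq_swap] at h
        exact tree_side_not_both D1.isTree.IsAcyclic hab hv h
      exact ⟨ESll_mem a b hv, ESll_not b a hv',
        hTb1.trans (bag_subset_edgeSide D1.T D1.bag hv)⟩
    · right
      have hv' : (D1.T.deleteEdges {s(b, a)}).Reachable b v1 := by
        rcases reach_del_cover (v := b) (hp1 a v1) with h | h
        · exact absurd h hv
        · rwa [Sym2.eq_swap] at h
      exact ⟨ESll_not a b hv, ESll_mem b a hv',
        hTb1.trans (bag_subset_edgeSide D1.T D1.bag hv')⟩
  have inr_sides : ∀ a b : D2.V, D2.T.Adj a b →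
      (edgeSide G bagS (Sum.inr a) (Sum.inr b) = edgeSide D2.T D2.bag a b ∪ S1 ∧
        edgeSide G bagS (Sum.inr b) (Sum.inr a) = edgeSide D2.T D2.bag b a ∧
        T ⊆ edgeSide D2.T D2.bag a b) ∨
      (edgeSide G bagS (Sum.inr a) (Sum.inr b) = edgeSide D2.T D2.bag a b ∧
        edgeSide G bagS (Sum.inr b) (Sum.inr a) = edgeSide D2.T D2.bag b a ∪ S1 ∧
        T ⊆ edgeSide D2.T D2.bag b a) := by
    intro a b hab
    by_cases hv : (D2.T.deleteEdges {s(a, b)}).Reachable a v2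
    · left
      have hv' : ¬ (D2.T.deleteEdges {s(b, a)}).Reachable b v2 := by
        intro h
        rw [Sym2.eq_swap] at h
        exact tree_side_not_both D2.isTree.IsAcyclic hab hv h
      exact ⟨ESrr_mem a b hv, ESrr_not b a hv',
        hTb2.trans (bag_subset_edgeSide D2.T D2.bag hv)⟩
    · right
      have hv' : (D2.T.deleteEdges {s(b, a)}).Reachable b v2 := by
        rcases reach_del_cover (v := b) (hp2 a v2) with h | h
        · exact absurd h hv
        · rwa [Sym2.eq_swap] at h
      exact ⟨ESrr_not a b hv, ESrr_mem b a hv',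
        hTb2.trans (bag_subset_edgeSide D2.T D2.bag hv')⟩
  -- inter_eq for inl-inl edges
  have inter_ll : ∀ a b : D1.V, D1.T.Adj a b →
      edgeSide G bagS (Sum.inl a) (Sum.inl b) ∩ edgeSide G bagS (Sum.inl b) (Sum.inl a)
        = D1.bag a ∩ D1.bag b := by
    intro a b hab
    have hIE := D1.inter_eq a b hab
    rcases inl_sides a b hab with ⟨e1, e2, hT⟩ | ⟨e1, e2, hT⟩
    · rw [e1, e2, Set.union_inter_distrib_right, ← hIE]
      have : S2 ∩ edgeSide D1.T D1.bag b a ⊆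
          edgeSide D1.T D1.bag a b ∩ edgeSide D1.T D1.bag b a := by
        intro x hx
        have hxT : x ∈ T := by rw [← hI]; exact ⟨hES1 b a hx.2, hx.1⟩
        exact ⟨hT hxT, hx.2⟩
      rw [Set.union_eq_self_of_subset_right this]
    · rw [e1, e2, Set.inter_union_distrib_left, ← hIE]
      have : edgeSide D1.T D1.bag a b ∩ S2 ⊆
          edgeSide D1.T D1.bag a b ∩ edgeSide D1.T D1.bag b a := by
        intro x hx
        have hxT : x ∈ T := by rw [← hI]; exact ⟨hES1 a b hx.1, hx.2⟩
        exact ⟨hx.1, hT hxT⟩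
      rw [Set.union_eq_self_of_subset_right this]
  have inter_rr : ∀ a b : D2.V, D2.T.Adj a b →
      edgeSide G bagS (Sum.inr a) (Sum.inr b) ∩ edgeSide G bagS (Sum.inr b) (Sum.inr a)
        = D2.bag a ∩ D2.bag b := by
    intro a b hab
    have hIE := D2.inter_eq a b hab
    rcases inr_sides a b hab with ⟨e1, e2, hT⟩ | ⟨e1, e2, hT⟩
    · rw [e1, e2, Set.union_inter_distrib_right, ← hIE]
      have : S1 ∩ edgeSide D2.T D2.bag b a ⊆
          edgeSide D2.T D2.bag a b ∩ edgeSide D2.T D2.bag b a := by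
        intro x hx
        have hxT : x ∈ T := by rw [← hI]; exact ⟨hx.1, hES2 b a hx.2⟩
        exact ⟨hT hxT, hx.2⟩
      rw [Set.union_eq_self_of_subset_right this]
    · rw [e1, e2, Set.inter_union_distrib_left, ← hIE]
      have : edgeSide D2.T D2.bag a b ∩ S1 ⊆
          edgeSide D2.T D2.bag a b ∩ edgeSide D2.T D2.bag b a := by
        intro x hx
        have hxT : x ∈ T := by rw [← hI]; exact ⟨hx.2, hES2 a b hx.1⟩
        exact ⟨hx.1, hT hxT⟩
      rw [Set.union_eq_self_of_subset_right this]
  -- infinite order for inl-inl edges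
  have io_ll : ∀ a b : D1.V, D1.T.Adj a b →
      ∀ x ∈ edgeSide G bagS (Sum.inl a) (Sum.inl b) \ (D1.bag a ∩ D1.bag b),
      ∀ y ∈ edgeSide G bagS (Sum.inl b) (Sum.inl a) \ (D1.bag a ∩ D1.bag b),
        orderOf (x * y) = 0 := by
    intro a b hab x hx y hy
    have hIE := D1.inter_eq a b hab
    have hIO := D1.infinite_order a b hab
    rcases inl_sides a b hab with ⟨e1, e2, hT⟩ | ⟨e1, e2, hT⟩
    · rw [e1] at hx; rw [e2] at hy
      by_cases hxA : x ∈ edgeSide D1.T D1.bag a b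
      · exact hIO x ⟨hxA, hx.2⟩ y ⟨hy.1, hy.2⟩
      · have hxS2 : x ∈ S2 := hx.1.resolve_left hxA
        have hxT : x ∉ T := fun h => hxA (hT h)
        have hyS1 : y ∈ S1 := hES1 b a hy.1
        have hyT : y ∉ T := by
          intro h
          exact hy.2 (hIE ▸ (⟨hT h, hy.1⟩ :
            y ∈ edgeSide D1.T D1.bag a b ∩ edgeSide D1.T D1.bag b a))
        rw [orderOf_mul_swap]
        exact hcross y ⟨hyS1, hyT⟩ x ⟨hxS2, hxT⟩
    · rw [e1] at hx; rw [e2] at hy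
      by_cases hyB : y ∈ edgeSide D1.T D1.bag b a
      · exact hIO x ⟨hx.1, hx.2⟩ y ⟨hyB, hy.2⟩
      · have hyS2 : y ∈ S2 := hy.1.resolve_left hyB
        have hyT : y ∉ T := fun h => hyB (hT h)
        have hxS1 : x ∈ S1 := hES1 a b hx.1
        have hxT : x ∉ T := by
          intro h
          exact hx.2 (hIE ▸ (⟨hx.1, hT h⟩ :
            x ∈ edgeSide D1.T D1.bag a b ∩ edgeSide D1.T D1.bag b a))
        exact hcross x ⟨hxS1, hxT⟩ y ⟨hyS2, hyT⟩
  have io_rr : ∀ a b : D2.V, D2.T.Adj a b →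
      ∀ x ∈ edgeSide G bagS (Sum.inr a) (Sum.inr b) \ (D2.bag a ∩ D2.bag b),
      ∀ y ∈ edgeSide G bagS (Sum.inr b) (Sum.inr a) \ (D2.bag a ∩ D2.bag b),
        orderOf (x * y) = 0 := by
    intro a b hab x hx y hy
    have hIE := D2.inter_eq a b hab
    have hIO := D2.infinite_order a b hab
    rcases inr_sides a b hab with ⟨e1, e2, hT⟩ | ⟨e1, e2, hT⟩
    · rw [e1] at hx; rw [e2] at hy
      by_cases hxA : x ∈ edgeSide D2.T D2.bag a b
      · exact hIO x ⟨hxA, hx.2⟩ y ⟨hy.1, hy.2⟩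
      · have hxS1 : x ∈ S1 := hx.1.resolve_left hxA
        have hxT : x ∉ T := fun h => hxA (hT h)
        have hyS2 : y ∈ S2 := hES2 b a hy.1
        have hyT : y ∉ T := by
          intro h
          exact hy.2 (hIE ▸ (⟨hT h, hy.1⟩ :
            y ∈ edgeSide D2.T D2.bag a b ∩ edgeSide D2.T D2.bag b a))
        exact hcross x ⟨hxS1, hxT⟩ y ⟨hyS2, hyT⟩
    · rw [e1] at hx; rw [e2] at hy
      by_cases hyB : y ∈ edgeSide D2.T D2.bag b a
      · exact hIO x ⟨hx.1, hx.2⟩ y ⟨hyB, hy.2⟩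
      · have hyS1 : y ∈ S1 := hy.1.resolve_left hyB
        have hyT : y ∉ T := fun h => hyB (hT h)
        have hxS2 : x ∈ S2 := hES2 a b hx.1
        have hxT : x ∉ T := by
          intro h
          exact hx.2 (hIE ▸ (⟨hx.1, hT h⟩ :
            x ∈ edgeSide D2.T D2.bag a b ∩ edgeSide D2.T D2.bag b a))
        rw [orderOf_mul_swap]
        exact hcross y ⟨hyS1, hyT⟩ x ⟨hxS2, hxT⟩
  have inter_br : edgeSide G bagS (Sum.inl v1) (Sum.inr v2) ∩
      edgeSide G bagS (Sum.inr v2) (Sum.inl v1) = D1.bag v1 ∩ D2.bag v2 := by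
    rw [ESbl, ESbr, hI, hbag12]
  refine ⟨{ V := D1.V ⊕ D2.V,
            fintypeV := inferInstance,
            T := G,
            isTree := glue_isTree D1.isTree D2.isTree,
            bag := bagS,
            bag_subset := ?_,
            bags_cover := ?_,
            inter_eq := ?_,
            infinite_order := ?_ },
    ?_, ?_, ?_, ?_⟩
  · rintro (a | a) <;> simp only [hbagS, Sum.elim_inl, Sum.elim_inr]
    · exact (D1.bag_subset a).trans hS1S
    · exact (D2.bag_subset a).trans hS2S
  · rw [Set.iUnion_sum]
    simp only [hbagS, Sum.elim_inl, Sum.elim_inr]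
    rw [D1.bags_cover, D2.bags_cover, hS]
  · rintro (a | a) (b | b) hadj
    · simp only [hbagS, Sum.elim_inl]
      exact inter_ll a b hadj
    · obtain ⟨rfl, rfl⟩ := (glue_adj_inl_inr (T1 := D1.T) (T2 := D2.T)).mp hadj
      simp only [hbagS, Sum.elim_inl, Sum.elim_inr]
      exact inter_br
    · obtain ⟨rfl, rfl⟩ := (glue_adj_inr_inl (T1 := D1.T) (T2 := D2.T)).mp hadj
      simp only [hbagS, Sum.elim_inl, Sum.elim_inr]
      rw [Set.inter_comm, inter_br, Set.inter_comm]
    · simp only [hbagS, Sum.elim_inr]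
      exact inter_rr a b hadj
  · rintro (a | a) (b | b) hadj
    · intro x hx y hy
      simp only [hbagS, Sum.elim_inl] at hx hy
      exact io_ll a b hadj x hx y hy
    · obtain ⟨rfl, rfl⟩ := (glue_adj_inl_inr (T1 := D1.T) (T2 := D2.T)).mp hadj
      intro x hx y hy
      simp only [hbagS, Sum.elim_inl, Sum.elim_inr] at hx hy
      rw [ESbl, hbag12] at hx
      rw [ESbr, hbag12] at hy
      exact hcross x hx y hy
    · obtain ⟨rfl, rfl⟩ := (glue_adj_inr_inl (T1 := D1.T) (T2 := D2.T)).mp hadj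
      intro x hx y hy
      simp only [hbagS, Sum.elim_inl, Sum.elim_inr] at hx hy
      rw [Set.inter_comm, hbag12, ESbr] at hx
      rw [Set.inter_comm, hbag12, ESbl] at hy
      rw [orderOf_mul_swap]
      exact hcross y hy x hx
    · intro x hx y hy
      simp only [hbagS, Sum.elim_inr] at hx hy
      exact io_rr a b hadj x hx y hy
  · rintro (a | a) (b | b) hadj
    · simp only [hbagS, Sum.elim_inl]
      exact hred1 a b hadj
    · obtain ⟨rfl, rfl⟩ := (glue_adj_inl_inr (T1 := D1.T) (T2 := D2.T)).mp hadj
      simp only [hbagS, Sum.elim_inl, Sum.elim_inr]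
      rw [hbag12]
      exact ⟨hv1, hv2⟩
    · obtain ⟨rfl, rfl⟩ := (glue_adj_inr_inl (T1 := D1.T) (T2 := D2.T)).mp hadj
      simp only [hbagS, Sum.elim_inl, Sum.elim_inr]
      rw [Set.inter_comm, hbag12]
      exact ⟨hv2, hv1⟩
    · simp only [hbagS, Sum.elim_inr]
      exact hred2 a b hadj
  · rintro (a | a) <;> simp only [hbagS, Sum.elim_inl, Sum.elim_inr]
    · exact hunsep1 a
    · exact hunsep2 a
  · rintro (a | a) (b | b) hadj
    · simp only [hbagS, Sum.elim_inl]
      exact hec1 a b hadj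
    · obtain ⟨rfl, rfl⟩ := (glue_adj_inl_inr (T1 := D1.T) (T2 := D2.T)).mp hadj
      simp only [hbagS, Sum.elim_inl, Sum.elim_inr]
      rw [hbag12]
      exact hTc
    · obtain ⟨rfl, rfl⟩ := (glue_adj_inr_inl (T1 := D1.T) (T2 := D2.T)).mp hadj
      simp only [hbagS, Sum.elim_inl, Sum.elim_inr]
      rw [Set.inter_comm, hbag12]
      exact hTc
    · simp only [hbagS, Sum.elim_inr]
      exact hec2 a b hadj
  · intro C hCS hCc
    by_cases hx : ∃ c ∈ C, c ∈ S1 \ T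
    · obtain ⟨c1, hc1C, hc1⟩ := hx
      have hCsub : C ⊆ S1 := by
        intro c hc
        have hcS : c ∈ S1 ∪ S2 := hS ▸ hCS hc
        rcases hcS with h | h
        · exact h
        · by_cases hcT : c ∈ T
          · exact hTS1 hcT
          · exact absurd (hcross c1 hc1 c ⟨h, hcT⟩) (hCc c1 hc1C c hc)
      obtain ⟨v, hv⟩ := hcb1 C hCsub hCc
      exact ⟨Sum.inl v, by simpa [hbagS] using hv⟩
    · push_neg at hx
      have hCsub : C ⊆ S2 := by
        intro c hc
        have hcS : c ∈ S1 ∪ S2 := hS ▸ hCS hc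
        rcases hcS with h | h
        · by_cases hcT : c ∈ T
          · exact hTS2 hcT
          · exact absurd ⟨h, hcT⟩ (hx c hc)
        · exact h
      obtain ⟨v, hv⟩ := hcb2 C hCsub hCc
      exact ⟨Sum.inr v, by simpa [hbagS] using hv⟩

lemma pkg_of_finite {S : Set W} (hfin : S.Finite) : Pkg S := by
  suffices h : ∀ n (S : Set W), S.Finite → S.ncard ≤ n → Pkg S from
    h S.ncard S hfin le_rfl
  intro n
  induction n with
  | zero =>
    intro S hfin hcard
    refine pkg_single ?_
    rintro ⟨T, hTS, hTc, a, ⟨haS, haT⟩, -, -, -⟩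
    have : S = ∅ := by rw [← Set.ncard_eq_zero hfin]; omega
    rw [this] at haS
    exact haS
  | succ n ih =>
    intro S hfin hcard
    by_cases hsep : SeparatedByComplete W S
    swap
    · exact pkg_single hsep
    obtain ⟨T, a, b, hTS, hTc, hAB, hmin⟩ := exists_min_absep hfin hsep
    obtain ⟨⟨haS, haT⟩, ⟨hbS, hbT⟩, hnr⟩ := hAB
    set Ca := {y | (presGraph W (S \ T)).Reachable a y} with hCadef
    have haCa : a ∈ Ca := Reachable.refl a
    have hCaST : Ca ⊆ S \ T := fun y hy => reach_mem ⟨haS, haT⟩ hy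
    set S1 := Ca ∪ T with hS1def
    set S2 := S \ Ca with hS2def
    have hS1S : S1 ⊆ S := Set.union_subset (hCaST.trans Set.diff_subset) hTS
    have hS2S : S2 ⊆ S := Set.diff_subset
    have hU : S1 ∪ S2 = S := by
      apply Set.Subset.antisymm (Set.union_subset hS1S hS2S)
      intro x hx
      by_cases hxa : x ∈ Ca
      · exact Or.inl (Or.inl hxa)
      · exact Or.inr ⟨hx, hxa⟩
    have hI : S1 ∩ S2 = T := by
      apply Set.Subset.antisymm
      · rintro x ⟨hca | ht, hxS, hxCa⟩
        · exact absurd hca hxCa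
        · exact ht
      · intro x hx
        exact ⟨Or.inr hx, hTS hx, fun hca => (hCaST hca).2 hx⟩
    have hS1T : S1 \ T = Ca := by
      apply Set.Subset.antisymm
      · rintro x ⟨hca | ht, hxT⟩
        · exact hca
        · exact absurd ht hxT
      · intro x hx
        exact ⟨Or.inl hx, (hCaST hx).2⟩
    have hcross : ∀ x ∈ S1 \ T, ∀ y ∈ S2 \ T, orderOf (x * y) = 0 := by
      intro x hx y hy
      rw [hS1T] at hx
      by_contra hord
      have hadj : (presGraph W (S \ T)).Adj x y :=
        ⟨fun h => hy.1.2 (h ▸ hx), hCaST hx, ⟨hy.1.1, hy.2⟩, hord⟩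
      exact hy.1.2 (hx.trans hadj.reachable)
    have hbS1 : b ∉ S1 := by
      rintro (hca | ht)
      · exact hnr hca
      · exact hbT ht
    have haS2 : a ∉ S2 := fun h => h.2 haCa
    have hS1lt : S1.ncard ≤ n := by
      have : S1 ⊂ S := ⟨hS1S, fun h => hbS1 (h hbS)⟩
      have := Set.ncard_lt_ncard this hfin
      omega
    have hS2lt : S2.ncard ≤ n := by
      have : S2 ⊂ S := ⟨hS2S, fun h => haS2 (h haS)⟩
      have := Set.ncard_lt_ncard this hfin
      omega
    obtain ⟨D1, hred1, hunsep1, hec1, hcb1⟩ := ih S1 (hfin.subset hS1S) hS1lt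
    obtain ⟨D2, hred2, hunsep2, hec2, hcb2⟩ := ih S2 (hfin.subset hS2S) hS2lt
    -- find bags properly containing T
    obtain ⟨v1', hv1'⟩ := hcb1 T Set.subset_union_right hTc
    have hnb1 : ∀ t ∈ T, ∃ x ∈ Ca, orderOf (t * x) ≠ 0 := by
      intro t ht
      have hssub : T \ {t} ⊂ T := by
        refine ⟨Set.diff_subset, fun h => ?_⟩
        exact (h ht).2 rfl
      obtain ⟨x, hxST, hre, hord⟩ :=
        sep_neighbor ht ⟨⟨haS, haT⟩, ⟨hbS, hbT⟩, hnr⟩ (hmin _ hssub)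
      exact ⟨x, hre, hord⟩
    have hXconn1 : ∀ x ∈ Ca, (presGraph W (S1 \ T)).Reachable a x := by
      rw [hS1T]
      exact fun x hx => reach_restrict haCa (fun y hy => hy) x hx
    have hCaS1T : Ca ⊆ S1 \ T := by rw [hS1T]
    obtain ⟨v1, hv1⟩ := exists_bag_ssuperset D1 hred1 hv1' hCaS1T haCa hXconn1 hnb1
    -- second side
    set Cb := {y | (presGraph W (S \ T)).Reachable b y} with hCbdef
    have hbCb : b ∈ Cb := Reachable.refl b
    have hCbS2T : Cb ⊆ S2 \ T := by
      intro y hy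
      have hyST : y ∈ S \ T := reach_mem ⟨hbS, hbT⟩ hy
      have hyCa : y ∉ Ca := fun hca => hnr (hca.trans hy.symm)
      exact ⟨⟨hyST.1, hyCa⟩, hyST.2⟩
    obtain ⟨v2', hv2'⟩ := hcb2 T (hI ▸ Set.inter_subset_right) hTc
    have hnb2 : ∀ t ∈ T, ∃ x ∈ Cb, orderOf (t * x) ≠ 0 := by
      intro t ht
      have hssub : T \ {t} ⊂ T := by
        refine ⟨Set.diff_subset, fun h => ?_⟩
        exact (h ht).2 rfl
      have hABba : IsABSeparator W S T b a :=
        ⟨⟨hbS, hbT⟩, ⟨haS, haT⟩, fun r => hnr r.symm⟩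
      have hminba : ¬ IsABSeparator W S (T \ {t}) b a := by
        intro h
        exact hmin _ hssub ⟨h.2.1, h.1, fun r => h.2.2 r.symm⟩
      obtain ⟨x, hxST, hre, hord⟩ := sep_neighbor ht hABba hminba
      exact ⟨x, hre, hord⟩
    have hXconn2 : ∀ x ∈ Cb, (presGraph W (S2 \ T)).Reachable b x := by
      intro x hx
      have h1 : (presGraph W Cb).Reachable b x :=
        reach_restrict hbCb (fun y hy => hy) x hx
      exact h1.mono (presGraph_mono hCbS2T)
    obtain ⟨v2, hv2⟩ := exists_bag_ssuperset D2 hred2 hv2' hCbS2T hbCb hXconn2 hnb2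
    exact glue_pkg hU hI hcross hTc D1 hred1 hunsep1 hec1 hcb1
      D2 hred2 hunsep2 hec2 hcb2 v1 v2 hv1 hv2

end JSJAux
end JSJAuxSec

/-- Lemma 2.2. Every Coxeter system `(W,S)` of finite rank admits a
reduced visual tree decomposition such that no bag is separated by a complete subset and
every edge set is complete. -/
theorem exists_visual_JSJ_decomposition {W : Type u} [Group W] (S : Set W)
    (hcox : IsCoxeterGeneratingSet W S) (hfin : S.Finite) :
    ∃ D : VisualTreeDecomp W S, D.Reduced ∧
      (∀ v, ¬ SeparatedByComplete W (D.bag v)) ∧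
      (∀ u v, D.T.Adj u v → IsCompleteSet W (D.bag u ∩ D.bag v)) := by
  obtain ⟨D, h1, h2, h3, h4⟩ := JSJAux.pkg_of_finite hfin
  exact ⟨D, h1, h2, h3⟩
end
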